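/- With M_i as above, the union M̄ = ⋃_{i≥0} (ℤ₊e + M_i) is a submonoid of ℤ^n, i.e., it is closed under addition and contains 0. -/

import Mathlib

open scoped NNReal
noncomputable section

/-- Real image of an integer vector. -/
def toR {r : ℕ} (v : Fin r → ℤ) : Fin r → ℝ := fun i => (v i : ℝ)

/-- The group of differences of a submonoid of an abelian group. -/
def gp {G : Type*} [AddCommGroup G] (M : AddSubmonoid G) : AddSubgroup G :=
  AddSubgroup.closure (M : Set G)

/-- `M` is normal: `c • x ∈ M` for `x ∈ gp M`, `c ≥ 1` implies `x ∈ M`. -/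
def IsNormalMonoid {G : Type*} [AddCommGroup G] (M : AddSubmonoid G) : Prop :=
  ∀ (c : ℕ) (x : G), 0 < c → x ∈ gp M → (c : ℤ) • x ∈ M → x ∈ M

/-- `M` is positive: no nontrivial units. -/
def IsPositiveMonoid {G : Type*} [AddCommGroup G] (M : AddSubmonoid G) : Prop :=
  ∀ x ∈ M, -x ∈ M → x = 0

/-- The cone `ℝ₊M ⊆ ℝ^r` spanned by a submonoid `M ⊆ ℤ^r`. -/
def coneM {r : ℕ} (M : AddSubmonoid (Fin r → ℤ)) : Set (Fin r → ℝ) :=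
  (Submodule.span ℝ≥0 (toR '' (M : Set (Fin r → ℤ))) : Submodule ℝ≥0 (Fin r → ℝ))

/-- The distinguished vector `e = (1,0) ∈ ℤ ⊕ ℤ^r`. -/
def eVec (r : ℕ) : ℤ × (Fin r → ℤ) := (1, 0)

/-- `M_i = (ℝ ⊕ ℝ₊M) ∩ (ℤ(x₁ - ie) + ⋯ + ℤ(x_r - ie))`, with `x_j - ie = (-i, x_j)`. -/
def Mi {r : ℕ} (M : AddSubmonoid (Fin r → ℤ)) (x : Fin r → (Fin r → ℤ)) (i : ℕ) :
    Set (ℤ × (Fin r → ℤ)) :=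
  {p | p ∈ AddSubgroup.closure (Set.range fun j => ((-(i : ℤ), x j) : ℤ × (Fin r → ℤ))) ∧
       toR p.2 ∈ coneM M}

/-- The submonoid (as a set) `ℤ₊e + M_i`. -/
def ZeMi {r : ℕ} (M : AddSubmonoid (Fin r → ℤ)) (x : Fin r → (Fin r → ℤ)) (i : ℕ) :
    Set (ℤ × (Fin r → ℤ)) :=
  {p | ∃ (z : ℕ) (m : ℤ × (Fin r → ℤ)), m ∈ Mi M x i ∧ p = (z : ℤ) • eVec r + m}

/-- Sum of the coordinates of `v` in the basis `b`. -/
def Fsum {r : ℕ} (b : Module.Basis (Fin r) ℤ (Fin r → ℤ)) (v : Fin r → ℤ) : ℤ :=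
  ∑ j, b.repr v j

lemma Fsum_add {r : ℕ} (b : Module.Basis (Fin r) ℤ (Fin r → ℤ)) (u v : Fin r → ℤ) :
    Fsum b (u + v) = Fsum b u + Fsum b v := by
  simp [Fsum, Finset.sum_add_distrib]

lemma Fsum_neg {r : ℕ} (b : Module.Basis (Fin r) ℤ (Fin r → ℤ)) (v : Fin r → ℤ) :
    Fsum b (-v) = -Fsum b v := by
  simp [Fsum, Finset.sum_neg_distrib]

lemma Fsum_basis {r : ℕ} (b : Module.Basis (Fin r) ℤ (Fin r → ℤ)) (j : Fin r) :
    Fsum b (b j) = 1 := by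
  simp [Fsum, Module.Basis.repr_self, Finsupp.single_apply]

/-- The lattice `∑ ℤ (x_j - ie)` as a kernel. -/
def Sgrp {r : ℕ} (b : Module.Basis (Fin r) ℤ (Fin r → ℤ)) (i : ℕ) :
    AddSubgroup (ℤ × (Fin r → ℤ)) where
  carrier := {p | p.1 = -(i : ℤ) * Fsum b p.2}
  zero_mem' := by simp [Fsum]
  add_mem' := by
    intro p q hp hq
    simp only [Set.mem_setOf_eq, Prod.fst_add, Prod.snd_add, Fsum_add] at *
    rw [hp, hq]; ring
  neg_mem' := by
    intro p hp
    simp only [Set.mem_setOf_eq, Prod.fst_neg, Prod.snd_neg, Fsum_neg] at *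
    rw [hp]; ring

lemma closure_eq_Sgrp {r : ℕ} (b : Module.Basis (Fin r) ℤ (Fin r → ℤ)) (i : ℕ) :
    AddSubgroup.closure (Set.range fun j => ((-(i : ℤ), b j) : ℤ × (Fin r → ℤ))) =
      Sgrp b i := by
  apply le_antisymm
  · rw [AddSubgroup.closure_le]
    rintro p ⟨j, rfl⟩
    show (-(i : ℤ)) = -(i : ℤ) * Fsum b (b j)
    rw [Fsum_basis]; ring
  · intro p hp
    have hrepr : p = ∑ j, (b.repr p.2 j) • ((-(i : ℤ), b j) : ℤ × (Fin r → ℤ)) := by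
      apply Prod.ext
      · rw [Prod.fst_sum]
        simp only [Prod.smul_fst, smul_eq_mul]
        have : ∑ j, b.repr p.2 j * (-(i : ℤ)) = -(i : ℤ) * Fsum b p.2 := by
          rw [Fsum, Finset.mul_sum]; apply Finset.sum_congr rfl; intros; ring
        rw [this]; exact hp
      · rw [Prod.snd_sum]
        simp only [Prod.smul_snd]
        exact (b.sum_repr p.2).symm
    rw [hrepr]
    exact sum_mem (fun j _ => AddSubgroup.zsmul_mem _
      (AddSubgroup.subset_closure (Set.mem_range_self j)) _)

lemma Fsum_cast {r : ℕ} (b : Module.Basis (Fin r) ℤ (Fin r → ℤ)) (v : Fin r → ℤ) :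
    ((Fsum b v : ℤ) : ℝ) = ∑ i, ((Fsum b (Pi.single i 1) : ℤ) : ℝ) * ((v i : ℤ) : ℝ) := by
  have hv : v = ∑ i, v i • (Pi.single i 1 : Fin r → ℤ) := by
    ext k
    rw [Finset.sum_apply]
    simp [Pi.single_apply, Finset.sum_ite_eq', mul_comm]
  have : Fsum b v = ∑ i, v i * Fsum b (Pi.single i 1) := by
    conv_lhs => rw [hv]
    unfold Fsum
    simp only [map_sum, map_smul, Finset.sum_apply', Finsupp.smul_apply, smul_eq_mul]
    rw [Finset.sum_comm]
    simp [Finset.mul_sum]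
  rw [this]
  push_cast
  apply Finset.sum_congr rfl
  intros; ring

lemma Fsum_nonneg {r : ℕ} (b : Module.Basis (Fin r) ℤ (Fin r → ℤ)) (v : Fin r → ℤ)
    (hv : toR v ∈ Submodule.span ℝ≥0 (Set.range fun j => toR (b j))) :
    0 ≤ Fsum b v := by
  obtain ⟨t, ht⟩ := (Submodule.mem_span_range_iff_exists_fun ℝ≥0).mp hv
  have key : ((Fsum b v : ℤ) : ℝ) = ∑ j, (t j : ℝ) := by
    rw [Fsum_cast]
    have hvi : ∀ i, ((v i : ℤ) : ℝ) = ∑ j, (t j : ℝ) * ((b j) i : ℝ) := by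
      intro i
      have := congrFun ht i
      rw [Finset.sum_apply] at this
      simp only [Pi.smul_apply, NNReal.smul_def, smul_eq_mul] at this
      exact this.symm
    calc ∑ i, ((Fsum b (Pi.single i 1) : ℤ) : ℝ) * ((v i : ℤ) : ℝ)
        = ∑ i, ∑ j, (t j : ℝ) * (((Fsum b (Pi.single i 1) : ℤ) : ℝ) * ((b j) i : ℝ)) := by
          apply Finset.sum_congr rfl
          intro i _
          rw [hvi i, Finset.mul_sum]
          apply Finset.sum_congr rfl; intros; ring
      _ = ∑ j, (t j : ℝ) * ∑ i, ((Fsum b (Pi.single i 1) : ℤ) : ℝ) * (((b j) i : ℤ) : ℝ) := by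
          rw [Finset.sum_comm]
          apply Finset.sum_congr rfl
          intro j _
          rw [Finset.mul_sum]
      _ = ∑ j, (t j : ℝ) * ((Fsum b (b j) : ℤ) : ℝ) := by
          apply Finset.sum_congr rfl
          intro j _
          rw [← Fsum_cast]
      _ = ∑ j, (t j : ℝ) := by
          apply Finset.sum_congr rfl
          intro j _
          rw [Fsum_basis]; simp
  have : (0 : ℝ) ≤ ((Fsum b v : ℤ) : ℝ) := by
    rw [key]
    exact Finset.sum_nonneg fun j _ => (t j).coe_nonneg
  exact_mod_cast this

lemma toR_add {r : ℕ} (u v : Fin r → ℤ) : toR (u + v) = toR u + toR v := by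
  funext i; simp [toR]

/-- M̄ = ⋃ᵢ (ℤ₊e + M_i) is a submonoid of ℤ^n: it contains 0 and is
closed under addition. -/
theorem statement5 {r : ℕ} (M : AddSubmonoid (Fin r → ℤ))
    (hFG : M.FG) (hpos : IsPositiveMonoid M) (hnorm : IsNormalMonoid M) (hgp : gp M = ⊤)
    (x : Fin r → (Fin r → ℤ)) (hx : ∃ b : Module.Basis (Fin r) ℤ (Fin r → ℤ), x = ⇑b)
    (hcone : coneM M ⊆
      (Submodule.span ℝ≥0 (Set.range fun j => toR (x j)) : Set (Fin r → ℝ))) :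
    (0 : ℤ × (Fin r → ℤ)) ∈ (⋃ i : ℕ, ZeMi M x i) ∧
    ∀ p ∈ (⋃ i : ℕ, ZeMi M x i), ∀ q ∈ (⋃ i : ℕ, ZeMi M x i),
      p + q ∈ (⋃ i : ℕ, ZeMi M x i) := by
  obtain ⟨b, rfl⟩ := hx
  constructor
  · refine Set.mem_iUnion.mpr ⟨0, 0, 0, ⟨AddSubgroup.zero_mem _, ?_⟩, by simp⟩
    have : toR (0 : ℤ × (Fin r → ℤ)).2 = 0 := by funext i; simp [toR]
    rw [this]
    exact (Submodule.span ℝ≥0 (toR '' (M : Set (Fin r → ℤ)))).zero_mem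
  · intro p hp q hq
    obtain ⟨i, hi⟩ := Set.mem_iUnion.mp hp
    obtain ⟨i', hi'⟩ := Set.mem_iUnion.mp hq
    obtain ⟨z, m, ⟨hmL, hmC⟩, rfl⟩ := hi
    obtain ⟨w, m', ⟨hmL', hmC'⟩, rfl⟩ := hi'
    rw [closure_eq_Sgrp] at hmL hmL'
    have hA : 0 ≤ Fsum b m.2 := Fsum_nonneg b m.2 (hcone hmC)
    have hB : 0 ≤ Fsum b m'.2 := Fsum_nonneg b m'.2 (hcone hmC')
    set δ : ℤ := (i' : ℤ) * Fsum b m.2 + (i : ℤ) * Fsum b m'.2 with hδ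
    have hδnn : 0 ≤ δ := by positivity
    refine Set.mem_iUnion.mpr ⟨i + i', z + w + δ.toNat,
      m + m' - δ • eVec r, ⟨?_, ?_⟩, ?_⟩
    · rw [closure_eq_Sgrp]
      show (m + m' - δ • eVec r).1 = -((i + i' : ℕ) : ℤ) * Fsum b (m + m' - δ • eVec r).2
      have h2 : (m + m' - δ • eVec r).2 = m.2 + m'.2 := by
        simp [eVec]
      have h1 : (m + m' - δ • eVec r).1 = m.1 + m'.1 - δ := by
        simp [eVec]
      rw [h1, h2, Fsum_add, hmL, hmL']
      push_cast
      ring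
    · have h2 : (m + m' - δ • eVec r).2 = m.2 + m'.2 := by simp [eVec]
      rw [h2, toR_add]
      exact (Submodule.span ℝ≥0 (toR '' (M : Set (Fin r → ℤ)))).add_mem hmC hmC'
    · have : ((z + w + δ.toNat : ℕ) : ℤ) = (z : ℤ) + w + δ := by
        push_cast [Int.toNat_of_nonneg hδnn]; ring
      rw [this]
      module
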